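/- Let r ≥ 4 and let m, t be integers satisfying C(t−1,r) ≤ m ≤ C(t−1,r) + C(t−2,r−1) − [(2r−6)·2^{r−1} + 2^{r−3} + (r−4)(2r−7) − 1]·(C(t−2,r−2) − 1). Then there exists a left-compressed r-graph G on vertex set [t] with m edges that does not contain [t−1]^{(r)} as a subgraph, such that λ(G) = λ^{r−}_{(m,t−1,t)}, the maximum of the Lagrangian over all r-graphs with t vertices and m edges not containing a clique of order t−1. -/

import Mathlib

/-- `lagEval E x` is λ(G,x): the sum over the edges of `E` of the product of the
weights (under `x`) of their vertices. -/
def lagEval (E : Finset (Finset ℕ)) (x : ℕ → ℝ) : ℝ :=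
  ∑ e ∈ E, ∏ i ∈ e, x i

/-- A feasible weighting: nonnegative entries, finitely supported, total weight 1. -/
def Feasible (x : ℕ → ℝ) : Prop :=
  (∀ i, 0 ≤ x i) ∧ ∃ S : Finset ℕ, (∀ i ∉ S, x i = 0) ∧ ∑ i ∈ S, x i = 1

/-- A feasible weighting on the vertex set [n] = {1,…,n}. -/
def FeasibleOn (n : ℕ) (x : ℕ → ℝ) : Prop :=
  (∀ i, 0 ≤ x i) ∧ (∀ i ∉ Finset.Icc 1 n, x i = 0) ∧ ∑ i ∈ Finset.Icc 1 n, x i = 1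

/-- The Lagrangian λ(G) of a hypergraph with edge set `E`: the supremum (in fact
maximum) of λ(G,x) over all feasible weightings `x`. -/
noncomputable def lagrangian (E : Finset (Finset ℕ)) : ℝ :=
  sSup {y : ℝ | ∃ x : ℕ → ℝ, Feasible x ∧ lagEval E x = y}

/-- `completeG s r` is [s]^{(r)}, the complete r-graph on {1,…,s}. -/
def completeG (s r : ℕ) : Finset (Finset ℕ) :=
  (Finset.Icc 1 s).powersetCard r

/-- `E` is (the edge set of) an r-graph on the vertex set [n] = {1,…,n}. -/
def IsRGraphOn (r n : ℕ) (E : Finset (Finset ℕ)) : Prop :=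
  ∀ e ∈ E, e.card = r ∧ e ⊆ Finset.Icc 1 n

/-- The r-graph `E` contains a clique of order `s` (inside the vertex set `V`):
some `s`-element subset of `V` has all of its `r`-element subsets as edges. -/
def ContainsCliqueOn (V : Finset ℕ) (r s : ℕ) (E : Finset (Finset ℕ)) : Prop :=
  ∃ S : Finset ℕ, S ⊆ V ∧ S.card = s ∧ S.powersetCard r ⊆ E

/-- `DomLE A B`: `A` and `B` have the same size and, listing both in increasing
order as `i_1 < ⋯ < i_r` and `j_1 < ⋯ < j_r`, one has `i_k ≤ j_k` for all `k`
(equivalently, for every threshold `c`, `A` has at most as many elements above `c`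
as `B`). -/
def DomLE (A B : Finset ℕ) : Prop :=
  A.card = B.card ∧
    ∀ c : ℕ, (A.filter fun a => c < a).card ≤ (B.filter fun b => c < b).card

/-- `E` is left-compressed: together with any edge it contains every set of positive
integers dominating it from the left. -/
def LeftCompressed (E : Finset (Finset ℕ)) : Prop :=
  ∀ B ∈ E, ∀ A : Finset ℕ, (∀ a ∈ A, 1 ≤ a) → DomLE A B → A ∈ E

/-- `nbhd E i` is E_i, the (r-1)-neighborhood of the vertex `i`:
all sets `A` with `i ∉ A` and `A ∪ {i} ∈ E`. -/
def nbhd (E : Finset (Finset ℕ)) (i : ℕ) : Finset (Finset ℕ) :=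
  (E.filter fun e => i ∈ e).image fun e => e.erase i

/-- `nbhd2 E i j` is E_{ij}, the (r-2)-neighborhood of the pair of vertices `i, j`. -/
def nbhd2 (E : Finset (Finset ℕ)) (i j : ℕ) : Finset (Finset ℕ) :=
  (E.filter fun e => i ∈ e ∧ j ∈ e).image fun e => (e.erase i).erase j

/-- `C` consists of the first `m` r-element subsets of {1,2,3,…} in the colex
ordering: it has `m` edges, all of them r-element sets of positive integers, and it
is an initial segment for the colex order. -/
def IsColexSegment (r m : ℕ) (C : Finset (Finset ℕ)) : Prop :=
  C.card = m ∧ (∀ e ∈ C, e.card = r ∧ ∀ a ∈ e, 1 ≤ a) ∧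
    ∀ A B : Finset ℕ, A.card = r → (∀ a ∈ A, 1 ≤ a) → B ∈ C →
      (toColex A : Colex (Finset ℕ)) < toColex B → A ∈ C

open Finset

/-! ### auxiliary definitions -/

/-- ambient edge set: all r-subsets of [t] -/
def Aall (r t : ℕ) : Finset (Finset ℕ) := (Finset.Icc 1 t).powersetCard r

/-- `B` is obtained from `A` by raising one element. -/
def SingleRaise (A B : Finset ℕ) : Prop :=
  ∃ a w, a ∈ A ∧ w ∉ A ∧ a < w ∧ B = insert w (A.erase a)

/-- count of elements above c -/
def cnt (c : ℕ) (A : Finset ℕ) : ℕ := (A.filter fun a => c < a).card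

lemma domLE_iff {A B : Finset ℕ} : DomLE A B ↔ A.card = B.card ∧ ∀ c, cnt c A ≤ cnt c B :=
  Iff.rfl

/-! ### basic lagEval and lagrangian facts -/

lemma Feasible.le_one {x : ℕ → ℝ} (hx : Feasible x) (i : ℕ) : x i ≤ 1 := by
  obtain ⟨hnn, S, hS0, hS1⟩ := hx
  by_cases hi : i ∈ S
  · calc x i ≤ ∑ j ∈ S, x j := Finset.single_le_sum (fun j _ => hnn j) hi
    _ = 1 := hS1
  · rw [hS0 i hi]; norm_num

lemma prod_nonneg' {x : ℕ → ℝ} (hx : ∀ i, 0 ≤ x i) (e : Finset ℕ) : 0 ≤ ∏ i ∈ e, x i :=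
  Finset.prod_nonneg fun i _ => hx i

lemma prod_le_one' {x : ℕ → ℝ} (hx : Feasible x) (e : Finset ℕ) : ∏ i ∈ e, x i ≤ 1 :=
  Finset.prod_le_one (fun i _ => hx.1 i) (fun i _ => hx.le_one i)

lemma lagEval_le_card {E : Finset (Finset ℕ)} {x : ℕ → ℝ} (hx : Feasible x) :
    lagEval E x ≤ (E.card : ℝ) := by
  calc lagEval E x ≤ ∑ _e ∈ E, (1:ℝ) := Finset.sum_le_sum fun e _ => prod_le_one' hx e
  _ = E.card := by simp

/-- the canonical feasible weight: all mass on vertex 1 -/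
noncomputable def unitW : ℕ → ℝ := fun i => if i = 1 then 1 else 0

lemma unitW_feasible : Feasible unitW := by
  refine ⟨fun i => ?_, {1}, fun i hi => ?_, by simp [unitW]⟩
  · unfold unitW; split <;> norm_num
  · simp only [Finset.mem_singleton] at hi; simp [unitW, hi]

lemma lagSet_nonempty (E : Finset (Finset ℕ)) :
    {y : ℝ | ∃ x : ℕ → ℝ, Feasible x ∧ lagEval E x = y}.Nonempty :=
  ⟨lagEval E unitW, unitW, unitW_feasible, rfl⟩

lemma lagSet_bddAbove (E : Finset (Finset ℕ)) :
    BddAbove {y : ℝ | ∃ x : ℕ → ℝ, Feasible x ∧ lagEval E x = y} := by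
  refine ⟨(E.card : ℝ), fun y hy => ?_⟩
  obtain ⟨x, hx, rfl⟩ := hy
  exact lagEval_le_card hx

lemma le_lagrangian {E : Finset (Finset ℕ)} {x : ℕ → ℝ} (hx : Feasible x) :
    lagEval E x ≤ lagrangian E :=
  le_csSup (lagSet_bddAbove E) ⟨x, hx, rfl⟩

lemma lagrangian_le {E : Finset (Finset ℕ)} {c : ℝ}
    (h : ∀ x : ℕ → ℝ, Feasible x → lagEval E x ≤ c) : lagrangian E ≤ c :=
  csSup_le (lagSet_nonempty E) (by rintro y ⟨x, hx, rfl⟩; exact h x hx)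

lemma FeasibleOn.feasible {n : ℕ} {x : ℕ → ℝ} (h : FeasibleOn n x) : Feasible x :=
  ⟨h.1, Finset.Icc 1 n, h.2.1, h.2.2⟩

/-! ### cnt helpers -/

lemma cnt_insert {w : ℕ} {A : Finset ℕ} (hw : w ∉ A) (c : ℕ) :
    cnt c (insert w A) = cnt c A + if c < w then 1 else 0 := by
  unfold cnt
  rw [Finset.filter_insert]
  split
  · rw [Finset.card_insert_of_notMem (fun h => hw (Finset.mem_of_mem_filter _ h))]
  · simp

lemma cnt_erase {a : ℕ} {A : Finset ℕ} (ha : a ∈ A) (c : ℕ) :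
    cnt c A = cnt c (A.erase a) + if c < a then 1 else 0 := by
  unfold cnt
  rw [Finset.filter_erase]
  by_cases h : c < a
  · rw [if_pos h, Finset.card_erase_of_mem (Finset.mem_filter.2 ⟨ha, h⟩)]
    have h0 : 1 ≤ (Finset.filter (fun a => c < a) A).card :=
      Finset.card_pos.2 ⟨a, Finset.mem_filter.2 ⟨ha, h⟩⟩
    exact (Nat.sub_add_cancel h0).symm
  · rw [if_neg h, Finset.erase_eq_of_notMem (fun hh => h (Finset.mem_filter.1 hh).2)]
    simp

lemma DomLE.refl (A : Finset ℕ) : DomLE A A := ⟨rfl, fun _ => le_rfl⟩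

lemma DomLE.trans {A B C : Finset ℕ} (h1 : DomLE A B) (h2 : DomLE B C) : DomLE A C :=
  ⟨h1.1.trans h2.1, fun c => (h1.2 c).trans (h2.2 c)⟩

lemma SingleRaise.card_eq {A B : Finset ℕ} (h : SingleRaise A B) : B.card = A.card := by
  obtain ⟨a, w, ha, hw, haw, rfl⟩ := h
  rw [Finset.card_insert_of_notMem (fun hc => hw (Finset.mem_of_mem_erase hc)),
    Finset.card_erase_of_mem ha]
  have : 0 < A.card := Finset.card_pos.2 ⟨a, ha⟩
  omega

lemma SingleRaise.domLE {A B : Finset ℕ} (h : SingleRaise A B) : DomLE A B := by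
  obtain ⟨a, w, ha, hw, haw, rfl⟩ := h
  constructor
  · exact (SingleRaise.card_eq ⟨a, w, ha, hw, haw, rfl⟩).symm
  · intro c
    show cnt c A ≤ cnt c (insert w (A.erase a))
    rw [show cnt c (insert w (A.erase a)) = cnt c (A.erase a) + if c < w then 1 else 0 from
      cnt_insert (fun hc => hw (Finset.mem_of_mem_erase hc)) c,
      show cnt c A = cnt c (A.erase a) + if c < a then 1 else 0 from cnt_erase ha c]
    have : (if c < a then 1 else 0) ≤ (if c < w then (1:ℕ) else 0) := by
      split <;> split <;> omega
    omega

lemma SingleRaise.ne {A B : Finset ℕ} (h : SingleRaise A B) : A ≠ B := by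
  obtain ⟨a, w, ha, hw, haw, rfl⟩ := h
  intro hc
  exact hw (hc ▸ Finset.mem_insert_self w _)

/-- elements of a dominated set are bounded by t -/
lemma DomLE.subset_Icc {A B : Finset ℕ} {t : ℕ} (h : DomLE A B) (hB : B ⊆ Finset.Icc 1 t)
    (hA : ∀ a ∈ A, 1 ≤ a) : A ⊆ Finset.Icc 1 t := by
  intro a ha
  rw [Finset.mem_Icc]
  refine ⟨hA a ha, ?_⟩
  by_contra hc
  push_neg at hc
  have h1 : 0 < cnt t A := Finset.card_pos.2 ⟨a, Finset.mem_filter.2 ⟨ha, hc⟩⟩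
  have h2 : cnt t B = 0 := by
    unfold cnt
    rw [Finset.card_eq_zero, Finset.filter_eq_empty_iff]
    intro b hb
    have := (Finset.mem_Icc.1 (hB hb)).2
    omega
  have := h.2 t
  unfold cnt at *
  omega

lemma DomLE.insert_nat {A B : Finset ℕ} {u : ℕ} (h : DomLE A B) (hA : u ∉ A) (hB : u ∉ B) :
    DomLE (insert u A) (insert u B) := by
  constructor
  · rw [Finset.card_insert_of_notMem hA, Finset.card_insert_of_notMem hB, h.1]
  · intro c
    show cnt c (insert u A) ≤ cnt c (insert u B)
    rw [cnt_insert hA c, cnt_insert hB c]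
    have hAB : cnt c A ≤ cnt c B := h.2 c
    omega

/-- erasing a smaller element dominates erasing a bigger one -/
lemma domLE_erase_mono {S : Finset ℕ} {a b : ℕ} (ha : a ∈ S) (hb : b ∈ S) (hab : a ≤ b) :
    DomLE (S.erase b) (S.erase a) := by
  constructor
  · rw [Finset.card_erase_of_mem ha, Finset.card_erase_of_mem hb]
  · intro c
    show cnt c (S.erase b) ≤ cnt c (S.erase a)
    have h1 := cnt_erase ha c
    have h2 := cnt_erase hb c
    have : (if c < a then (1:ℕ) else 0) ≤ if c < b then 1 else 0 := by
      split <;> split <;> omega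
    omega

/-- any k-subset of [n] is dominated by the top k-subset -/
lemma domLE_top {b : Finset ℕ} {n k : ℕ} (hb : b ⊆ Finset.Icc 1 n) (hcard : b.card = k)
    (hk : k ≤ n) : DomLE b (Finset.Icc (n - k + 1) n) := by
  constructor
  · rw [hcard, Nat.card_Icc]; omega
  · intro c
    show cnt c b ≤ cnt c (Finset.Icc (n - k + 1) n)
    unfold cnt
    have hle1 : (b.filter fun a => c < a).card ≤ k := by
      rw [← hcard]; exact Finset.card_filter_le _ _
    have hle2 : (b.filter fun a => c < a).card ≤ n - c := by
      have : (b.filter fun a => c < a) ⊆ Finset.Icc (c+1) n := by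
        intro z hz
        obtain ⟨hz1, hz2⟩ := Finset.mem_filter.1 hz
        rw [Finset.mem_Icc]
        exact ⟨hz2, (Finset.mem_Icc.1 (hb hz1)).2⟩
      calc (b.filter fun a => c < a).card ≤ (Finset.Icc (c+1) n).card :=
            Finset.card_le_card this
        _ = n - c := by rw [Nat.card_Icc]; omega
    have : ((Finset.Icc (n - k + 1) n).filter fun a => c < a).card = min k (n - c) := by
      have : ((Finset.Icc (n - k + 1) n).filter fun a => c < a) =
          Finset.Icc (max (n - k + 1) (c + 1)) n := by
        ext z
        simp only [Finset.mem_filter, Finset.mem_Icc, max_le_iff]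
        omega
      rw [this, Nat.card_Icc]
      omega
    omega

/-! ### chain decomposition of domination into single raises -/

lemma DomLE.mem_top {A B : Finset ℕ} {t : ℕ} (h : DomLE A B) (hB : B ⊆ Finset.Icc 1 t)
    (ht : 1 ≤ t) (htA : t ∈ A) : t ∈ B := by
  have h1 : 1 ≤ cnt (t-1) A := Finset.card_pos.2 ⟨t, Finset.mem_filter.2 ⟨htA, by omega⟩⟩
  have h2 : cnt (t-1) A ≤ cnt (t-1) B := h.2 (t-1)
  have : 1 ≤ cnt (t-1) B := le_trans h1 h2
  obtain ⟨x, hx⟩ := Finset.card_pos.1 this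
  obtain ⟨hx1, hx2⟩ := Finset.mem_filter.1 hx
  have := (Finset.mem_Icc.1 (hB hx1)).2
  have : x = t := by omega
  exact this ▸ hx1

lemma chain_step {A B : Finset ℕ} {t : ℕ} (h : DomLE A B) (hne : A ≠ B) :
    ∃ B', SingleRaise B' B ∧ DomLE A B' ∧ B' ⊆ A ∪ B ∧ (t ∈ A → t ∈ B → t ∈ B') ∧
      (∑ x ∈ B', x) < ∑ x ∈ B, x := by
  have hBA : (B \ A).Nonempty := by
    rw [Finset.sdiff_nonempty]
    intro hc
    exact hne (Finset.eq_of_subset_of_card_le hc (le_of_eq h.1)).symm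
  have hAB : (A \ B).Nonempty := by
    rw [Finset.sdiff_nonempty]
    intro hc
    exact hne (Finset.eq_of_subset_of_card_le hc (ge_of_eq h.1))
  set b := (B \ A).max' hBA with hbdef
  set a := (A \ B).max' hAB with hadef
  have hbB : b ∈ B := (Finset.mem_sdiff.1 ((B \ A).max'_mem hBA)).1
  have hbnA : b ∉ A := (Finset.mem_sdiff.1 ((B \ A).max'_mem hBA)).2
  have haA : a ∈ A := (Finset.mem_sdiff.1 ((A \ B).max'_mem hAB)).1
  have hanB : a ∉ B := (Finset.mem_sdiff.1 ((A \ B).max'_mem hAB)).2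
  have hmaxA : ∀ x ∈ A, x ∉ B → x ≤ a := fun x hx hx' =>
    Finset.le_max' _ _ (Finset.mem_sdiff.2 ⟨hx, hx'⟩)
  have hmaxB : ∀ x ∈ B, x ∉ A → x ≤ b := fun x hx hx' =>
    Finset.le_max' _ _ (Finset.mem_sdiff.2 ⟨hx, hx'⟩)
  -- the strict count inequality on the half-open interval
  have key : ∀ c, a ≤ c → c < b → cnt c A < cnt c B := by
    intro c hca hcb
    have hsub : A.filter (fun z => c < z) ⊆ B.filter (fun z => c < z) := by
      intro z hz
      obtain ⟨hz1, hz2⟩ := Finset.mem_filter.1 hz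
      refine Finset.mem_filter.2 ⟨?_, hz2⟩
      by_contra hzB
      have := hmaxA z hz1 hzB
      omega
    have hss : A.filter (fun z => c < z) ⊂ B.filter (fun z => c < z) := by
      refine Finset.ssubset_iff_of_subset hsub |>.2 ⟨b, ?_, ?_⟩
      · exact Finset.mem_filter.2 ⟨hbB, hcb⟩
      · intro hc'
        exact hbnA (Finset.mem_filter.1 hc').1
    exact Finset.card_lt_card hss
  have hab : a < b := by
    rcases lt_trichotomy a b with h' | h' | h'
    · exact h'
    · exact absurd (h' ▸ haA) hbnA
    · -- b < a : contradiction with DomLE at c = a - 1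
      have ha1 : 1 ≤ a := by omega
      have h1 : cnt (a-1) B < cnt (a-1) A := by
        have hsub : B.filter (fun z => a-1 < z) ⊆ A.filter (fun z => a-1 < z) := by
          intro z hz
          obtain ⟨hz1, hz2⟩ := Finset.mem_filter.1 hz
          refine Finset.mem_filter.2 ⟨?_, hz2⟩
          by_contra hzA
          have := hmaxB z hz1 hzA
          omega
        have hss : B.filter (fun z => a-1 < z) ⊂ A.filter (fun z => a-1 < z) := by
          refine Finset.ssubset_iff_of_subset hsub |>.2 ⟨a, ?_, ?_⟩
          · exact Finset.mem_filter.2 ⟨haA, by omega⟩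
          · intro hc'
            exact hanB (Finset.mem_filter.1 hc').1
        exact Finset.card_lt_card hss
      have h2 : cnt (a-1) A ≤ cnt (a-1) B := h.2 (a-1)
      omega
  have hanBe : a ∉ B.erase b := fun hc => hanB (Finset.mem_of_mem_erase hc)
  refine ⟨insert a (B.erase b), ⟨a, b, Finset.mem_insert_self a _, ?_, hab, ?_⟩, ?_, ?_, ?_, ?_⟩
  · -- b ∉ insert a (B.erase b)
    intro hc
    rcases Finset.mem_insert.1 hc with h' | h'
    · omega
    · exact (Finset.notMem_erase b B) h'
  · -- B = insert b ((insert a (B.erase b)).erase a)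
    rw [Finset.erase_insert hanBe, Finset.insert_erase hbB]
  · -- DomLE A (insert a (B.erase b))
    constructor
    · rw [Finset.card_insert_of_notMem hanBe, Finset.card_erase_of_mem hbB, h.1]
      have : 1 ≤ B.card := Finset.card_pos.2 ⟨b, hbB⟩
      omega
    · intro c
      show cnt c A ≤ cnt c (insert a (B.erase b))
      rw [cnt_insert hanBe c]
      have he : cnt c B = cnt c (B.erase b) + if c < b then 1 else 0 := cnt_erase hbB c
      have hABc : cnt c A ≤ cnt c B := h.2 c
      by_cases hca : c < a
      · have : c < b := by omega
        simp only [if_pos hca, if_pos this] at *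
        omega
      · by_cases hcb : c < b
        · have := key c (by omega) hcb
          simp only [if_neg hca, if_pos hcb] at *
          omega
        · simp only [if_neg hca, if_neg hcb] at *
          omega
  · -- subset of A ∪ B
    intro z hz
    rcases Finset.mem_insert.1 hz with h' | h'
    · exact Finset.mem_union_left _ (h' ▸ haA)
    · exact Finset.mem_union_right _ (Finset.mem_of_mem_erase h')
  · -- t-invariant
    intro htA htB
    have hbt : b ≠ t := fun hc => hbnA (hc ▸ htA)
    exact Finset.mem_insert_of_mem (Finset.mem_erase.2 ⟨fun hc => hbt hc.symm, htB⟩)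
  · -- sum decreases
    rw [Finset.sum_insert hanBe]
    have := Finset.sum_erase_add B id hbB
    simp only [id] at this
    omega

lemma chain_to_single {t : ℕ} (ht : 1 ≤ t) (G : Finset (Finset ℕ)) :
    ∀ N, ∀ A B : Finset ℕ, (∑ x ∈ B, x) ≤ N → DomLE A B → A ≠ B → A ∉ G → B ∈ G →
      A ⊆ Finset.Icc 1 t → B ⊆ Finset.Icc 1 t →
      ∃ A' B', SingleRaise A' B' ∧ A' ∉ G ∧ B' ∈ G ∧ A' ⊆ Finset.Icc 1 t ∧
        A'.card = B'.card ∧ (t ∈ A → t ∈ A') := by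
  intro N
  induction N with
  | zero =>
    intro A B hsum hdom hne hA hB hAs hBs
    exfalso
    have hBne : B.Nonempty := by
      rcases Finset.eq_empty_or_nonempty B with h' | h'
      · exfalso
        apply hne
        have hA0 : A.card = 0 := by rw [hdom.1, h']; simp
        rw [Finset.card_eq_zero.1 hA0, h']
      · exact h'
    obtain ⟨z, hz⟩ := hBne
    have hz1 : 1 ≤ z := (Finset.mem_Icc.1 (hBs hz)).1
    have : z ≤ ∑ x ∈ B, x := by
      have := Finset.single_le_sum (f := fun x : ℕ => x) (fun i _ => Nat.zero_le i) hz
      simpa using this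
    omega
  | succ N ih =>
    intro A B hsum hdom hne hA hB hAs hBs
    obtain ⟨B', hsr, hdom', hsub', htinv, hlt⟩ := chain_step (t := t) hdom hne
    have hB's : B' ⊆ Finset.Icc 1 t := hsub'.trans (Finset.union_subset hAs hBs)
    by_cases hB'G : B' ∈ G
    · have hAB' : A ≠ B' := by
        intro hc
        exact hA (hc ▸ hB'G)
      obtain ⟨A', B'', h1, h2, h3, h4, h5, h6⟩ :=
        ih A B' (by omega) hdom' hAB' hA hB'G hAs hB's
      exact ⟨A', B'', h1, h2, h3, h4, h5, h6⟩
    · refine ⟨B', B, hsr, hB'G, hB, hB's, (SingleRaise.card_eq hsr).symm, ?_⟩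
      intro htA
      exact htinv htA (hdom.mem_top hBs ht htA)

/-! ### counting helpers -/

lemma card_subsets_with_one {k : ℕ} {D : Finset ℕ} {v : ℕ} (hv : v ∈ D)
    (S : Finset (Finset ℕ)) (hS : ∀ s ∈ S, s ⊆ D ∧ s.card = k ∧ v ∈ s) :
    S.card ≤ (D.card - 1).choose (k-1) := by
  have h1 : S.card ≤ ((D.erase v).powersetCard (k-1)).card := by
    apply Finset.card_le_card_of_injOn (fun s => s.erase v)
    · intro s hs
      obtain ⟨hs1, hs2, hs3⟩ := hS s hs
      rw [Finset.mem_coe, Finset.mem_powersetCard]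
      exact ⟨Finset.erase_subset_erase v hs1, by rw [Finset.card_erase_of_mem hs3, hs2]⟩
    · intro s1 hs1 s2 hs2 heq
      have e1 := (hS s1 hs1).2.2
      have e2 := (hS s2 hs2).2.2
      have heq' : s1.erase v = s2.erase v := heq
      rw [← Finset.insert_erase e1, ← Finset.insert_erase e2, heq']
  rw [Finset.card_powersetCard, Finset.card_erase_of_mem hv] at h1
  exact h1

lemma card_subsets_with_two {r t : ℕ} {v w : ℕ} (hv : v ∈ Finset.Icc 1 t)
    (hw : w ∈ Finset.Icc 1 t) (hvw : v ≠ w) (S : Finset (Finset ℕ))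
    (hS : ∀ s ∈ S, s ⊆ Finset.Icc 1 t ∧ s.card = r ∧ v ∈ s ∧ w ∈ s) :
    S.card ≤ (t-2).choose (r-2) := by
  have h1 : S.card ≤ ((((Finset.Icc 1 t).erase v).erase w).powersetCard (r-2)).card := by
    apply Finset.card_le_card_of_injOn (fun s => (s.erase v).erase w)
    · intro s hs
      obtain ⟨hs1, hs2, hs3, hs4⟩ := hS s hs
      rw [Finset.mem_coe, Finset.mem_powersetCard]
      constructor
      · exact Finset.erase_subset_erase w (Finset.erase_subset_erase v hs1)
      · rw [Finset.card_erase_of_mem (Finset.mem_erase.2 ⟨fun hc => hvw hc.symm, hs4⟩),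
          Finset.card_erase_of_mem hs3, hs2]
        omega
    · intro s1 hs1 s2 hs2 heq
      obtain ⟨_, _, e1, f1⟩ := hS s1 hs1
      obtain ⟨_, _, e2, f2⟩ := hS s2 hs2
      have g1 : w ∈ s1.erase v := Finset.mem_erase.2 ⟨fun hc => hvw hc.symm, f1⟩
      have g2 : w ∈ s2.erase v := Finset.mem_erase.2 ⟨fun hc => hvw hc.symm, f2⟩
      have heq' : (s1.erase v).erase w = (s2.erase v).erase w := heq
      rw [← Finset.insert_erase e1, ← Finset.insert_erase g1,
        ← Finset.insert_erase e2, ← Finset.insert_erase g2, heq']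
  rw [Finset.card_powersetCard, Finset.card_erase_of_mem
      (Finset.mem_erase.2 ⟨fun hc => hvw hc.symm, hw⟩), Finset.card_erase_of_mem hv,
    Nat.card_Icc] at h1
  have harith : t + 1 - 1 - 1 - 1 = t - 2 := by omega
  rw [harith] at h1
  exact h1

/-! ### structure of a clique created by a replacement -/

lemma clique_structure {r t : ℕ} (ht : 1 ≤ t) {G : Finset (Finset ℕ)} {A B : Finset ℕ}
    (hGcf : ¬ContainsCliqueOn (Finset.Icc 1 t) r (t-1) G)
    (hA : A ∉ G) (hB : B ∈ G) (hBsub : B ⊆ Finset.Icc 1 t) (hBcard : B.card = r)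
    (hcr : ContainsCliqueOn (Finset.Icc 1 t) r (t-1) (insert A (G.erase B))) :
    ∃ v ∈ Finset.Icc 1 t, v ∉ A ∧ v ∈ B ∧
      ∀ χ : Finset ℕ, χ ⊆ (Finset.Icc 1 t).erase v → χ.card = r → χ ∉ G → χ = A := by
  obtain ⟨S, hSsub, hScard, hSpow⟩ := hcr
  have hcard_lt : S.card < (Finset.Icc 1 t).card := by
    rw [hScard, Nat.card_Icc]; omega
  have hns : ¬ (Finset.Icc 1 t ⊆ S) := fun hc =>
    absurd (Finset.card_le_card hc) (not_le.2 hcard_lt)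
  obtain ⟨v, hvIcc, hvS⟩ := Finset.not_subset.1 hns
  have hSeq : S = (Finset.Icc 1 t).erase v := by
    apply Finset.eq_of_subset_of_card_le
    · exact Finset.subset_erase.2 ⟨hSsub, hvS⟩
    · rw [Finset.card_erase_of_mem hvIcc, hScard, Nat.card_Icc]; omega
  have hall : ∀ χ : Finset ℕ, χ ⊆ (Finset.Icc 1 t).erase v → χ.card = r →
      χ ∈ insert A (G.erase B) := by
    intro χ h1 h2
    exact hSpow (Finset.mem_powersetCard.2 ⟨hSeq ▸ h1, h2⟩)
  have hAB : A ≠ B := fun hc => hA (hc ▸ hB)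
  have hvA : v ∉ A := by
    intro hvA
    apply hGcf
    refine ⟨S, hSsub, hScard, ?_⟩
    intro χ hχ
    obtain ⟨h1, h2⟩ := Finset.mem_powersetCard.1 hχ
    have := hall χ (hSeq ▸ h1) h2
    rcases Finset.mem_insert.1 this with h' | h'
    · exfalso
      subst h'
      exact (Finset.mem_erase.1 ((hSeq ▸ h1) hvA)).1 rfl
    · exact Finset.mem_of_mem_erase h'
  have hvB : v ∈ B := by
    by_contra hvB
    have := hall B (Finset.subset_erase.2 ⟨hBsub, hvB⟩) hBcard
    rcases Finset.mem_insert.1 this with h' | h'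
    · exact hAB h'.symm
    · exact (Finset.notMem_erase B G) h'
  refine ⟨v, hvIcc, hvA, hvB, ?_⟩
  intro χ h1 h2 h3
  have := hall χ h1 h2
  rcases Finset.mem_insert.1 this with h' | h'
  · exact h'
  · exact absurd (Finset.mem_of_mem_erase h') h3

/-! ### the terminal lemma -/

lemma mem_Aall {r t : ℕ} {s : Finset ℕ} : s ∈ Aall r t ↔ s ⊆ Finset.Icc 1 t ∧ s.card = r :=
  Finset.mem_powersetCard

lemma Icc_erase_top {t : ℕ} (ht : 1 ≤ t) :
    (Finset.Icc 1 t).erase t = Finset.Icc 1 (t-1) := by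
  ext z
  simp only [Finset.mem_erase, Finset.mem_Icc]
  omega

lemma no_single_pair (r t Q : ℕ) (hr : 4 ≤ r) (hrt2 : r + 2 ≤ t) (hQ : r + 2 ≤ Q)
    (G : Finset (Finset ℕ)) (hGsub : G ⊆ Aall r t)
    (hGcf : ¬ContainsCliqueOn (Finset.Icc 1 t) r (t-1) G)
    (hM : (t-2).choose (r-2) + Q ≤ ((Aall r t) \ G).card)
    (hterm : ∀ A B : Finset ℕ, A ∈ Aall r t → A ∉ G → B ∈ G → SingleRaise A B →
      ContainsCliqueOn (Finset.Icc 1 t) r (t-1) (insert A (G.erase B)))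
    (A₁ B₁ : Finset ℕ) (hA₁ : A₁ ∈ Aall r t) (hA₁G : A₁ ∉ G) (hB₁ : B₁ ∈ G)
    (hsr : SingleRaise A₁ B₁) : False := by
  have ht1 : 1 ≤ t := by omega
  set M := (Aall r t) \ G with hMdef
  -- creation structure of a single dominated-missing pair
  have getv : ∀ A B : Finset ℕ, A ∈ Aall r t → A ∉ G → B ∈ G → SingleRaise A B →
      ∃ v ∈ Finset.Icc 1 t, v ∉ A ∧ v ∈ B ∧
        ∀ χ : Finset ℕ, χ ⊆ (Finset.Icc 1 t).erase v → χ.card = r → χ ∉ G → χ = A := by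
    intro A B hA hAG hBG hsr'
    have hBall := mem_Aall.1 (hGsub hBG)
    exact clique_structure ht1 hGcf hAG hBG hBall.1 hBall.2 (hterm A B hA hAG hBG hsr')
  -- no two distinct missing sets can each dominate into G
  have twopairs : ∀ A B A' B' : Finset ℕ, A ∈ Aall r t → A ∉ G → B ∈ G → SingleRaise A B →
      A' ∈ Aall r t → A' ∉ G → B' ∈ G → SingleRaise A' B' → A ≠ A' → False := by
    intro A B A' B' hA hAG hBG hsrAB hA' hA'G hB'G hsrA'B' hAA'
    obtain ⟨v, hvI, hvA, hvB, huniq⟩ := getv A B hA hAG hBG hsrAB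
    obtain ⟨v', hv'I, hv'A', hv'B', huniq'⟩ := getv A' B' hA' hA'G hB'G hsrA'B'
    have hvA' : v ∈ A' := by
      by_contra hc
      have hsub : A' ⊆ (Finset.Icc 1 t).erase v :=
        Finset.subset_erase.2 ⟨(mem_Aall.1 hA').1, hc⟩
      exact hAA' (huniq A' hsub (mem_Aall.1 hA').2 hA'G).symm
    have hv'A : v' ∈ A := by
      by_contra hc
      have hsub : A ⊆ (Finset.Icc 1 t).erase v' :=
        Finset.subset_erase.2 ⟨(mem_Aall.1 hA).1, hc⟩
      exact hAA' (huniq' A hsub (mem_Aall.1 hA).2 hAG)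
    have hvv' : v ≠ v' := fun hc => hvA (hc ▸ hv'A)
    -- every missing set other than A, A' contains both v and v'
    set P := M.filter (fun χ => v ∈ χ ∧ v' ∈ χ) with hPdef
    have hMsub : M ⊆ insert A (insert A' P) := by
      intro χ hχ
      obtain ⟨hχall, hχG⟩ := Finset.mem_sdiff.1 hχ
      by_cases h1 : χ = A
      · exact Finset.mem_insert.2 (Or.inl h1)
      by_cases h2 : χ = A'
      · exact Finset.mem_insert.2 (Or.inr (Finset.mem_insert.2 (Or.inl h2)))
      refine Finset.mem_insert.2 (Or.inr (Finset.mem_insert.2 (Or.inr ?_)))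
      rw [hPdef, Finset.mem_filter]
      refine ⟨hχ, ?_, ?_⟩
      · by_contra hc
        exact h1 (huniq χ (Finset.subset_erase.2 ⟨(mem_Aall.1 hχall).1, hc⟩)
          (mem_Aall.1 hχall).2 hχG)
      · by_contra hc
        exact h2 (huniq' χ (Finset.subset_erase.2 ⟨(mem_Aall.1 hχall).1, hc⟩)
          (mem_Aall.1 hχall).2 hχG)
    have hPcard : P.card ≤ (t-2).choose (r-2) := by
      apply card_subsets_with_two hvI hv'I hvv'
      intro s hs
      obtain ⟨hs1, hs2⟩ := Finset.mem_filter.1 hs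
      obtain ⟨hsall, _⟩ := Finset.mem_sdiff.1 hs1
      exact ⟨(mem_Aall.1 hsall).1, (mem_Aall.1 hsall).2, hs2.1, hs2.2⟩
    have hMle : M.card ≤ 2 + (t-2).choose (r-2) := by
      calc M.card ≤ (insert A (insert A' P)).card := Finset.card_le_card hMsub
      _ ≤ (insert A' P).card + 1 := Finset.card_insert_le _ _
      _ ≤ P.card + 1 + 1 := by have := Finset.card_insert_le A' P; omega
      _ ≤ 2 + (t-2).choose (r-2) := by omega
    omega
  -- main creation structure
  obtain ⟨v₁, hv₁I, hv₁A₁, hv₁B₁, huniq₁⟩ := getv A₁ B₁ hA₁ hA₁G hB₁ hsr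
  have allmiss : ∀ χ ∈ M, χ ≠ A₁ → v₁ ∈ χ := by
    intro χ hχ hne
    obtain ⟨hχall, hχG⟩ := Finset.mem_sdiff.1 hχ
    by_contra hc
    exact hne (huniq₁ χ (Finset.subset_erase.2 ⟨(mem_Aall.1 hχall).1, hc⟩)
      (mem_Aall.1 hχall).2 hχG)
  have hA₁M : A₁ ∈ M := Finset.mem_sdiff.2 ⟨hA₁, hA₁G⟩
  by_cases hv₁t : v₁ = t
  case neg =>
    -- v₁ < t : all missing sets are A₁, a shift of A₁, or contain {t-1, t}
    have hv₁lt : v₁ < t := by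
      have := (Finset.mem_Icc.1 hv₁I).2; omega
    set P := M.filter (fun χ => (t-1) ∈ χ ∧ t ∈ χ) with hPdef
    set V := A₁.image (fun w => insert v₁ (A₁.erase w)) with hVdef
    have hMsub : M ⊆ insert A₁ (P ∪ V) := by
      intro χ hχ
      obtain ⟨hχall, hχG⟩ := Finset.mem_sdiff.1 hχ
      by_cases h1 : χ = A₁
      · exact Finset.mem_insert.2 (Or.inl h1)
      have hv₁χ : v₁ ∈ χ := allmiss χ hχ h1
      refine Finset.mem_insert.2 (Or.inr ?_)
      by_cases h2 : (t-1) ∈ χ ∧ t ∈ χ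
      · exact Finset.mem_union_left _ (Finset.mem_filter.2 ⟨hχ, h2⟩)
      -- find w ∈ (v₁, t] \ χ
      have hw : ∃ w, w ∉ χ ∧ v₁ < w ∧ 1 ≤ w ∧ w ≤ t := by
        by_cases h3 : t ∈ χ
        · refine ⟨t-1, ?_, ?_, by omega, by omega⟩
          · intro hc; exact h2 ⟨hc, h3⟩
          · -- v₁ < t-1 : since v₁ ∈ χ but t-1 ∉ χ, v₁ ≠ t-1
            have : v₁ ≠ t-1 := by
              intro hc
              exact h2 ⟨hc ▸ hv₁χ, h3⟩
            omega
        · exact ⟨t, h3, hv₁lt, by omega, le_rfl⟩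
      obtain ⟨w, hwχ, hv₁w, hw1, hwt⟩ := hw
      set χ' := insert w (χ.erase v₁) with hχ'def
      have hsrχ : SingleRaise χ χ' := ⟨v₁, w, hv₁χ, hwχ, hv₁w, rfl⟩
      have hχ'all : χ' ∈ Aall r t := by
        rw [mem_Aall]
        constructor
        · intro z hz
          rcases Finset.mem_insert.1 hz with h' | h'
          · rw [h']; exact Finset.mem_Icc.2 ⟨hw1, hwt⟩
          · exact (mem_Aall.1 hχall).1 (Finset.mem_of_mem_erase h')
        · rw [hsrχ.card_eq, (mem_Aall.1 hχall).2]
      by_cases h4 : χ' ∈ G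
      · exact absurd (twopairs χ χ' A₁ B₁ hχall hχG h4 hsrχ hA₁ hA₁G hB₁ hsr h1) id
      · -- χ' missing and avoids v₁, so χ' = A₁
        have hχ'M : χ' ∈ M := Finset.mem_sdiff.2 ⟨hχ'all, h4⟩
        have hv₁χ' : v₁ ∉ χ' := by
          intro hc
          rcases Finset.mem_insert.1 hc with h' | h'
          · omega
          · exact (Finset.notMem_erase v₁ χ) h'
        have hχ'A₁ : χ' = A₁ := by
          by_contra hc
          exact hv₁χ' (allmiss χ' hχ'M hc)
        -- then χ = insert v₁ (A₁.erase w)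
        have hwA₁ : w ∈ A₁ := hχ'A₁ ▸ Finset.mem_insert_self w _
        have : A₁.erase w = χ.erase v₁ := by
          rw [← hχ'A₁, hχ'def, Finset.erase_insert (fun hc => hwχ (Finset.mem_of_mem_erase hc))]
        refine Finset.mem_union_right _ ?_
        rw [hVdef, Finset.mem_image]
        exact ⟨w, hwA₁, by rw [this, Finset.insert_erase hv₁χ]⟩
    have hPcard : P.card ≤ (t-2).choose (r-2) := by
      apply card_subsets_with_two (v := t-1) (w := t)
        (Finset.mem_Icc.2 ⟨by omega, by omega⟩) (Finset.mem_Icc.2 ⟨by omega, le_rfl⟩)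
        (by omega)
      intro s hs
      obtain ⟨hs1, hs2⟩ := Finset.mem_filter.1 hs
      obtain ⟨hsall, _⟩ := Finset.mem_sdiff.1 hs1
      exact ⟨(mem_Aall.1 hsall).1, (mem_Aall.1 hsall).2, hs2.1, hs2.2⟩
    have hVcard : V.card ≤ r := by
      calc V.card ≤ A₁.card := Finset.card_image_le
      _ = r := (mem_Aall.1 hA₁).2
    have hMle : M.card ≤ 1 + ((t-2).choose (r-2) + r) := by
      calc M.card ≤ (insert A₁ (P ∪ V)).card := Finset.card_le_card hMsub
      _ ≤ (P ∪ V).card + 1 := Finset.card_insert_le _ _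
      _ ≤ P.card + V.card + 1 := by have := Finset.card_union_le P V; omega
      _ ≤ 1 + ((t-2).choose (r-2) + r) := by omega
    omega
  case pos =>
    -- v₁ = t
    rw [hv₁t] at hv₁A₁
    have allmiss_t : ∀ χ ∈ M, χ ≠ A₁ → t ∈ χ := by
      intro χ hh1 hh2
      rw [← hv₁t]
      exact allmiss χ hh1 hh2
    have hA₁sub : A₁ ⊆ Finset.Icc 1 (t-1) := by
      rw [← Icc_erase_top ht1]
      exact Finset.subset_erase.2 ⟨(mem_Aall.1 hA₁).1, hv₁A₁⟩
    set U := (M.filter (fun χ => t ∈ χ)).image (fun χ => χ.erase t) with hUdef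
    have hUcard : U.card = (M.filter (fun χ => t ∈ χ)).card := by
      apply Finset.card_image_of_injOn
      intro χ₁ h₁ χ₂ h₂ heq
      have e₁ : t ∈ χ₁ := (Finset.mem_filter.1 h₁).2
      have e₂ : t ∈ χ₂ := (Finset.mem_filter.1 h₂).2
      have heq' : χ₁.erase t = χ₂.erase t := heq
      rw [← Finset.insert_erase e₁, ← Finset.insert_erase e₂, heq']
    have hfilneg : M.filter (fun χ => ¬ t ∈ χ) = {A₁} := by
      ext χ
      simp only [Finset.mem_filter, Finset.mem_singleton]
      constructor
      · rintro ⟨h1, h2⟩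
        by_contra hc
        exact h2 (allmiss_t χ h1 hc)
      · rintro rfl
        exact ⟨hA₁M, hv₁A₁⟩
    have hUM : U.card + 1 = M.card := by
      have hsplit := Finset.card_filter_add_card_filter_not (s := M)
        (p := fun χ => t ∈ χ)
      have hfl : M.filter (fun a => ¬ (fun χ => t ∈ χ) a) = {A₁} := hfilneg
      rw [hfl] at hsplit
      rw [hUcard]
      simpa using hsplit
    have hU_elem : ∀ b ∈ U, b ⊆ Finset.Icc 1 (t-1) ∧ b.card = r - 1 ∧
        insert t b ∈ M ∧ t ∉ b := by
      intro b hb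
      rw [hUdef, Finset.mem_image] at hb
      obtain ⟨χ, hχ, rfl⟩ := hb
      obtain ⟨hχM, hχt⟩ := Finset.mem_filter.1 hχ
      obtain ⟨hχall, _⟩ := Finset.mem_sdiff.1 hχM
      refine ⟨?_, ?_, ?_, Finset.notMem_erase t χ⟩
      · rw [← Icc_erase_top ht1]
        exact Finset.erase_subset_erase t (mem_Aall.1 hχall).1
      · rw [Finset.card_erase_of_mem hχt, (mem_Aall.1 hχall).2]
      · rw [Finset.insert_erase hχt]; exact hχM
    -- key claim: all elements of U contain some common vertex u₀ ∈ Icc 1 (t-1)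
    have key : ∃ u₀ ∈ Finset.Icc 1 (t-1), ∀ b ∈ U, u₀ ∈ b := by
      by_cases hA₁Ms : A₁ = Finset.Icc (t-r) (t-1)
      · -- A₁ is the top set: every missing base contains t-1
        refine ⟨t-1, Finset.mem_Icc.2 ⟨by omega, le_rfl⟩, ?_⟩
        intro b hb
        by_contra hbc
        obtain ⟨hbsub, hbcard, hbM, hbt⟩ := hU_elem b hb
        have hbsub2 : b ⊆ Finset.Icc 1 (t-2) := by
          intro z hz
          have hz1 := Finset.mem_Icc.1 (hbsub hz)
          have hz2 : z ≠ t-1 := fun hc => hbc (hc ▸ hz)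
          exact Finset.mem_Icc.2 ⟨hz1.1, by omega⟩
        have hbM₂ : DomLE b (Finset.Icc (t - 2 - (r-1) + 1) (t-2)) :=
          domLE_top hbsub2 hbcard (by omega)
        have harith : t - 2 - (r-1) + 1 = t - r := by omega
        rw [harith] at hbM₂
        have hM₂eq : Finset.Icc (t-r) (t-2) = (Finset.Icc (t-r) (t-1)).erase (t-1) := by
          ext z
          simp only [Finset.mem_erase, Finset.mem_Icc]
          omega
        obtain ⟨a, w, ha, hw, haw, hBeq⟩ := hsr
        have haMs : a ∈ Finset.Icc (t-r) (t-1) := hA₁Ms ▸ ha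
        have hwMs : w ∉ Finset.Icc (t-r) (t-1) := fun hc => hw (by rw [hA₁Ms]; exact hc)
        have hwB : w ∈ B₁ := hBeq ▸ Finset.mem_insert_self w _
        have hwle : w ≤ t := (Finset.mem_Icc.1 ((mem_Aall.1 (hGsub hB₁)).1 hwB)).2
        have hwt : w = t := by
          have h1 := Finset.mem_Icc.1 haMs
          have h2 : ¬ (t - r ≤ w ∧ w ≤ t-1) := fun hc => hwMs (Finset.mem_Icc.2 hc)
          omega
        have hM₂b₀ : DomLE (Finset.Icc (t-r) (t-2)) ((Finset.Icc (t-r) (t-1)).erase a) := by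
          rw [hM₂eq]
          exact domLE_erase_mono haMs (Finset.mem_Icc.2 ⟨by omega, le_rfl⟩)
            ((Finset.mem_Icc.1 haMs).2)
        have hbb₀ : DomLE b ((Finset.Icc (t-r) (t-1)).erase a) := hbM₂.trans hM₂b₀
        have htb₀ : t ∉ (Finset.Icc (t-r) (t-1)).erase a := by
          intro hc
          have := Finset.mem_Icc.1 (Finset.mem_of_mem_erase hc)
          omega
        have hXB : DomLE (insert t b) (insert t ((Finset.Icc (t-r) (t-1)).erase a)) :=
          hbb₀.insert_nat hbt htb₀
        have hB₁eq : B₁ = insert t ((Finset.Icc (t-r) (t-1)).erase a) := by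
          rw [hBeq, hwt, hA₁Ms]
        rw [← hB₁eq] at hXB
        obtain ⟨hXall, hXG⟩ := Finset.mem_sdiff.1 hbM
        have hXne : insert t b ≠ B₁ := fun hc => hXG (hc ▸ hB₁)
        obtain ⟨A', B'', hsr', hA'G, hB''G, hA'sub, hcards, htA'⟩ :=
          chain_to_single ht1 G (∑ x ∈ B₁, x) (insert t b) B₁ le_rfl hXB hXne hXG hB₁
            (mem_Aall.1 hXall).1 (mem_Aall.1 (hGsub hB₁)).1
        have hA'all : A' ∈ Aall r t :=
          mem_Aall.2 ⟨hA'sub, by rw [hcards, (mem_Aall.1 (hGsub hB''G)).2]⟩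
        have htinA' : t ∈ A' := htA' (Finset.mem_insert_self t b)
        have hA'ne : A' ≠ A₁ := by
          intro hc
          rw [hc, hA₁Ms] at htinA'
          have := Finset.mem_Icc.1 htinA'
          omega
        exact twopairs A' B'' A₁ B₁ hA'all hA'G hB''G hsr' hA₁ hA₁G hB₁
          ⟨a, w, ha, hw, haw, hBeq⟩ hA'ne
      · -- A₁ is not the top set: raise it inside [t-1]
        have hcardA₁ : A₁.card = r := (mem_Aall.1 hA₁).2
        have hDne : ((Finset.Icc 1 (t-1)) \ A₁).Nonempty := by
          rw [← Finset.card_pos, Finset.card_sdiff_of_subset hA₁sub, Nat.card_Icc, hcardA₁]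
          omega
        set D := (Finset.Icc 1 (t-1)) \ A₁ with hDdef
        set w := D.max' hDne with hwdef
        have hwD := D.max'_mem hDne
        have hwIcc : w ∈ Finset.Icc 1 (t-1) := (Finset.mem_sdiff.1 hwD).1
        have hwA₁ : w ∉ A₁ := (Finset.mem_sdiff.1 hwD).2
        have hex : ∃ a ∈ A₁, a < w := by
          by_contra hc
          push_neg at hc
          have hsub1 : A₁ ⊆ Finset.Icc (w+1) (t-1) := by
            intro z hz
            have h1 := Finset.mem_Icc.1 (hA₁sub hz)
            have h2 := hc z hz
            have h3 : z ≠ w := fun hcc => hwA₁ (hcc ▸ hz)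
            exact Finset.mem_Icc.2 ⟨by omega, h1.2⟩
          have hsub2 : Finset.Icc (w+1) (t-1) ⊆ A₁ := by
            intro z hz
            have h1 := Finset.mem_Icc.1 hz
            by_contra hzc
            have hzD : z ∈ D := Finset.mem_sdiff.2 ⟨Finset.mem_Icc.2 ⟨by omega, h1.2⟩, hzc⟩
            have := Finset.le_max' D z hzD
            omega
          have heq : A₁ = Finset.Icc (w+1) (t-1) := Finset.Subset.antisymm hsub1 hsub2
          have hcard2 : r = t-1-w := by rw [← hcardA₁, heq, Nat.card_Icc]; omega
          have hwle : w ≤ t-1 := (Finset.mem_Icc.1 hwIcc).2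
          apply hA₁Ms
          rw [heq]
          congr 1
          omega
        obtain ⟨a, haA₁, haw⟩ := hex
        have hsrB' : SingleRaise A₁ (insert w (A₁.erase a)) := ⟨a, w, haA₁, hwA₁, haw, rfl⟩
        set B' := insert w (A₁.erase a) with hB'def
        have hB'sub1 : B' ⊆ Finset.Icc 1 (t-1) := by
          intro z hz
          rcases Finset.mem_insert.1 hz with h' | h'
          · exact h' ▸ hwIcc
          · exact hA₁sub (Finset.mem_of_mem_erase h')
        have hB'all : B' ∈ Aall r t := by
          rw [mem_Aall]
          refine ⟨?_, by rw [hsrB'.card_eq, hcardA₁]⟩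
          intro z hz
          have := Finset.mem_Icc.1 (hB'sub1 hz)
          exact Finset.mem_Icc.2 ⟨this.1, by omega⟩
        have hB'G : B' ∈ G := by
          by_contra hc
          have hB'M : B' ∈ M := Finset.mem_sdiff.2 ⟨hB'all, hc⟩
          have hB'ne : B' ≠ A₁ := (SingleRaise.ne hsrB').symm
          have h5 := allmiss_t B' hB'M hB'ne
          have := Finset.mem_Icc.1 (hB'sub1 h5)
          omega
        obtain ⟨v', hv'I, hv'A₁, hv'B', huniq'⟩ := getv A₁ B' hA₁ hA₁G hB'G hsrB'
        have hv't : v' ≠ t := by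
          have := Finset.mem_Icc.1 (hB'sub1 hv'B')
          omega
        refine ⟨v', hB'sub1 hv'B', ?_⟩
        intro b hb
        by_contra hbc
        obtain ⟨hbsub, hbcard, hbM, hbt⟩ := hU_elem b hb
        obtain ⟨hXall, hXG⟩ := Finset.mem_sdiff.1 hbM
        have hsubv' : insert t b ⊆ (Finset.Icc 1 t).erase v' := by
          intro z hz
          refine Finset.mem_erase.2 ⟨?_, (mem_Aall.1 hXall).1 hz⟩
          rcases Finset.mem_insert.1 hz with h' | h'
          · intro hcc
            apply hv't
            omega
          · intro hcc
            exact hbc (hcc ▸ h')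
        have hXeq := huniq' (insert t b) hsubv' (mem_Aall.1 hXall).2 hXG
        rw [← hXeq] at hv₁A₁
        exact hv₁A₁ (Finset.mem_insert_self t b)
    obtain ⟨u₀, hu₀I, hu₀⟩ := key
    have hUle : U.card ≤ (t-2).choose (r-2) := by
      have h := card_subsets_with_one (D := Finset.Icc 1 (t-1)) (v := u₀) (k := r-1) hu₀I U ?_
      · rw [Nat.card_Icc] at h
        have e1 : t - 1 + 1 - 1 - 1 = t - 2 := by omega
        have e2 : r - 1 - 1 = r - 2 := by omega
        rw [e1, e2] at h
        exact h
      · intro s hs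
        obtain ⟨h1, h2, _, _⟩ := hU_elem s hs
        exact ⟨h1, h2, hu₀ s hs⟩
    omega

/-! ### terminal states are left-compressed -/

lemma terminal_LC (r t Q : ℕ) (hr : 4 ≤ r) (hrt2 : r + 2 ≤ t) (hQ : r + 2 ≤ Q)
    (G : Finset (Finset ℕ)) (hGsub : G ⊆ Aall r t)
    (hGcf : ¬ContainsCliqueOn (Finset.Icc 1 t) r (t-1) G)
    (hM : (t-2).choose (r-2) + Q ≤ ((Aall r t) \ G).card)
    (hterm : ∀ A B : Finset ℕ, A ∈ Aall r t → A ∉ G → B ∈ G → SingleRaise A B →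
      ContainsCliqueOn (Finset.Icc 1 t) r (t-1) (insert A (G.erase B))) :
    LeftCompressed G := by
  have ht1 : 1 ≤ t := by omega
  intro B hB A hpos hdom
  by_cases hAB : A = B
  · exact hAB ▸ hB
  by_contra hAG
  have hBall := mem_Aall.1 (hGsub hB)
  have hAsub : A ⊆ Finset.Icc 1 t := hdom.subset_Icc hBall.1 hpos
  obtain ⟨A', B', hsr', hA'G, hB'G, hA'sub, hcards, _⟩ :=
    chain_to_single ht1 G (∑ x ∈ B, x) A B le_rfl hdom hAB hAG hB hAsub hBall.1
  have hA'all : A' ∈ Aall r t :=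
    mem_Aall.2 ⟨hA'sub, by rw [hcards, (mem_Aall.1 (hGsub hB'G)).2]⟩
  exact no_single_pair r t Q hr hrt2 hQ G hGsub hGcf hM hterm A' B' hA'all hA'G hB'G hsr'

/-! ### the replacement process -/

def phiW (G : Finset (Finset ℕ)) : ℕ := ∑ e ∈ G, ∑ v ∈ e, v

/-- x is non-increasing on [1,t] -/
def SortedW (t : ℕ) (x : ℕ → ℝ) : Prop := ∀ i j, 1 ≤ i → i ≤ j → j ≤ t → x j ≤ x i

lemma lagEval_replace_ge {G : Finset (Finset ℕ)} {A B : Finset ℕ} {x : ℕ → ℝ} {t : ℕ}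
    (hx0 : ∀ i, 0 ≤ x i) (hxs : SortedW t x)
    (hB : B ∈ G) (hA : A ∉ G) (hsr : SingleRaise A B) (hBsub : B ⊆ Finset.Icc 1 t)
    (hAsub : A ⊆ Finset.Icc 1 t) :
    lagEval G x ≤ lagEval (insert A (G.erase B)) x := by
  obtain ⟨a, w, ha, hw, haw, hBeq⟩ := hsr
  have hprodB : ∏ i ∈ B, x i = x w * ∏ i ∈ A.erase a, x i := by
    rw [hBeq, Finset.prod_insert (fun hc => hw (Finset.mem_of_mem_erase hc))]
  have hprodA : ∏ i ∈ A, x i = x a * ∏ i ∈ A.erase a, x i := by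
    rw [← Finset.prod_erase_mul A x ha]
    ring
  have hwB : w ∈ B := hBeq ▸ Finset.mem_insert_self w _
  have hxle : x w ≤ x a :=
    hxs a w (Finset.mem_Icc.1 (hAsub ha)).1 (le_of_lt haw) (Finset.mem_Icc.1 (hBsub hwB)).2
  have hprodle : ∏ i ∈ B, x i ≤ ∏ i ∈ A, x i := by
    rw [hprodA, hprodB]
    exact mul_le_mul_of_nonneg_right hxle (Finset.prod_nonneg fun i _ => hx0 i)
  unfold lagEval
  rw [Finset.sum_insert (fun hc => hA (Finset.mem_of_mem_erase hc))]
  have h1 : ∑ e ∈ G, ∏ i ∈ e, x i =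
      (∏ i ∈ B, x i) + ∑ e ∈ G.erase B, ∏ i ∈ e, x i :=
    (Finset.add_sum_erase G _ hB).symm
  rw [h1]
  linarith [hprodle]

lemma phiW_replace_lt {G : Finset (Finset ℕ)} {A B : Finset ℕ}
    (hB : B ∈ G) (hA : A ∉ G) (hsr : SingleRaise A B) :
    phiW (insert A (G.erase B)) < phiW G := by
  obtain ⟨a, w, ha, hw, haw, hBeq⟩ := hsr
  have hsA : ∑ v ∈ A, v < ∑ v ∈ B, v := by
    rw [hBeq, Finset.sum_insert (fun hc => hw (Finset.mem_of_mem_erase hc))]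
    have h2 := Finset.add_sum_erase A (fun v => v) ha
    omega
  unfold phiW
  rw [Finset.sum_insert (fun hc => hA (Finset.mem_of_mem_erase hc))]
  have h2 : ∑ e ∈ G, (∑ v ∈ e, v) = (∑ v ∈ B, v) + ∑ e ∈ G.erase B, ∑ v ∈ e, v :=
    (Finset.add_sum_erase G _ hB).symm
  have h3 : ∑ e ∈ G.erase B, (∑ v ∈ e, v) ≤ ∑ e ∈ G, ∑ v ∈ e, v := by omega
  omega

lemma process (r t m Q : ℕ) (hr : 4 ≤ r) (hrt2 : r + 2 ≤ t) (hQ : r + 2 ≤ Q)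
    (hMQ : ∀ G : Finset (Finset ℕ), G ⊆ Aall r t → G.card = m →
      (t-2).choose (r-2) + Q ≤ ((Aall r t) \ G).card) :
    ∀ N G, phiW G ≤ N → G ⊆ Aall r t → G.card = m →
      ¬ContainsCliqueOn (Finset.Icc 1 t) r (t-1) G →
      ∀ x : ℕ → ℝ, Feasible x → SortedW t x →
      ∃ G', G' ⊆ Aall r t ∧ G'.card = m ∧
        ¬ContainsCliqueOn (Finset.Icc 1 t) r (t-1) G' ∧
        LeftCompressed G' ∧ lagEval G x ≤ lagrangian G' := by
  intro N
  induction N with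
  | zero =>
    intro G hphi hGsub hGcard hGcf x hxf hxs
    by_cases hmove : ∃ A B : Finset ℕ, A ∈ Aall r t ∧ A ∉ G ∧ B ∈ G ∧ SingleRaise A B ∧
        ¬ContainsCliqueOn (Finset.Icc 1 t) r (t-1) (insert A (G.erase B))
    · exfalso
      obtain ⟨A, B, hA, hAG, hBG, hsr, _⟩ := hmove
      have := phiW_replace_lt hBG hAG hsr
      omega
    · push_neg at hmove
      refine ⟨G, hGsub, hGcard, hGcf, ?_, le_lagrangian hxf⟩
      exact terminal_LC r t Q hr hrt2 hQ G hGsub hGcf (hMQ G hGsub hGcard) hmove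
  | succ N ih =>
    intro G hphi hGsub hGcard hGcf x hxf hxs
    by_cases hmove : ∃ A B : Finset ℕ, A ∈ Aall r t ∧ A ∉ G ∧ B ∈ G ∧ SingleRaise A B ∧
        ¬ContainsCliqueOn (Finset.Icc 1 t) r (t-1) (insert A (G.erase B))
    · obtain ⟨A, B, hA, hAG, hBG, hsr, hcf2⟩ := hmove
      set G₂ := insert A (G.erase B) with hG₂def
      have hAnerase : A ∉ G.erase B := fun hc => hAG (Finset.mem_of_mem_erase hc)
      have hG₂sub : G₂ ⊆ Aall r t := by
        intro e he
        rcases Finset.mem_insert.1 he with h' | h'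
        · exact h' ▸ hA
        · exact hGsub (Finset.mem_of_mem_erase h')
      have hG₂card : G₂.card = m := by
        rw [hG₂def, Finset.card_insert_of_notMem hAnerase, Finset.card_erase_of_mem hBG,
          hGcard]
        have : 1 ≤ m := hGcard ▸ Finset.card_pos.2 ⟨B, hBG⟩
        omega
      have hphi2 : phiW G₂ ≤ N := by
        have hlt := phiW_replace_lt hBG hAG hsr
        rw [← hG₂def] at hlt
        omega
      obtain ⟨G', h1, h2, h3, h4, h5⟩ := ih G₂ hphi2 hG₂sub hG₂card hcf2 x hxf hxs
      refine ⟨G', h1, h2, h3, h4, le_trans ?_ h5⟩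
      exact lagEval_replace_ge hxf.1 hxs hBG hAG hsr (mem_Aall.1 (hGsub hBG)).1
        (mem_Aall.1 hA).1
    · push_neg at hmove
      refine ⟨G, hGsub, hGcard, hGcf, ?_, le_lagrangian hxf⟩
      exact terminal_LC r t Q hr hrt2 hQ G hGsub hGcf (hMQ G hGsub hGcard) hmove

/-! ### mass shift: reduce any feasible weighting to one supported on [1,t] -/

lemma mass_shift {t : ℕ} (ht : 1 ≤ t) {x : ℕ → ℝ} (hx : Feasible x) :
    ∃ y : ℕ → ℝ, FeasibleOn t y ∧ ∀ E : Finset (Finset ℕ), (∀ e ∈ E, e ⊆ Finset.Icc 1 t) →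
      lagEval E x ≤ lagEval E y := by
  obtain ⟨hx0, S, hS0, hS1⟩ := hx
  have hsum_le : ∑ i ∈ Finset.Icc 1 t, x i ≤ 1 := by
    rw [← hS1]
    have h1 : ∑ i ∈ Finset.Icc 1 t, x i = ∑ i ∈ Finset.Icc 1 t ∩ S, x i := by
      refine (Finset.sum_subset Finset.inter_subset_left ?_).symm
      intro i hi hni
      exact hS0 i (fun hc => hni (Finset.mem_inter.2 ⟨hi, hc⟩))
    rw [h1]
    exact Finset.sum_le_sum_of_subset_of_nonneg Finset.inter_subset_right
      (fun i _ _ => hx0 i)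
  set δ := 1 - ∑ i ∈ Finset.Icc 1 t, x i with hδdef
  have hδ0 : 0 ≤ δ := by rw [hδdef]; linarith
  refine ⟨fun i => if i ∈ Finset.Icc 1 t then (if i = 1 then x 1 + δ else x i) else 0,
    ⟨?_, ?_, ?_⟩, ?_⟩
  · intro i
    show (0:ℝ) ≤ if i ∈ Finset.Icc 1 t then (if i = 1 then x 1 + δ else x i) else 0
    split
    · split
      · linarith [hx0 1]
      · exact hx0 i
    · exact le_rfl
  · intro i hi
    show (if i ∈ Finset.Icc 1 t then (if i = 1 then x 1 + δ else x i) else 0) = 0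
    rw [if_neg hi]
  · have h1Icc : (1:ℕ) ∈ Finset.Icc 1 t := Finset.mem_Icc.2 ⟨le_rfl, ht⟩
    have hyeq : ∀ i ∈ Finset.Icc 1 t,
        (if i ∈ Finset.Icc 1 t then (if i = 1 then x 1 + δ else x i) else 0) =
          x i + (if i = 1 then δ else 0) := by
      intro i hi
      rw [if_pos hi]
      split
      · next h => rw [h]
      · ring
    rw [Finset.sum_congr rfl hyeq, Finset.sum_add_distrib]
    have : ∑ i ∈ Finset.Icc 1 t, (if i = 1 then δ else 0) = δ := by
      rw [Finset.sum_ite_eq' (Finset.Icc 1 t) 1 (fun _ => δ), if_pos h1Icc]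
    rw [this, hδdef]
    ring
  · intro E hE
    unfold lagEval
    apply Finset.sum_le_sum
    intro e he
    apply Finset.prod_le_prod (fun i _ => hx0 i)
    intro i hi
    have hiIcc := hE e he hi
    show x i ≤ if i ∈ Finset.Icc 1 t then (if i = 1 then x 1 + δ else x i) else 0
    rw [if_pos hiIcc]
    split
    · next h => rw [h]; linarith
    · exact le_rfl

/-! ### sorting permutation -/

noncomputable def iccEquiv (t : ℕ) : Fin t ≃ {n : ℕ // n ∈ Finset.Icc 1 t} where
  toFun k := ⟨(k : ℕ) + 1, by rw [Finset.mem_Icc]; omega⟩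
  invFun n := ⟨(n : ℕ) - 1, by have := Finset.mem_Icc.1 n.2; omega⟩
  left_inv k := by ext; simp
  right_inv n := by
    have := Finset.mem_Icc.1 n.2
    ext
    simp
    omega

lemma exists_sorting_perm {t : ℕ} (ht : 1 ≤ t) (y : ℕ → ℝ) (hy : FeasibleOn t y) :
    ∃ π : Equiv.Perm ℕ, (∀ i ∈ Finset.Icc 1 t, π i ∈ Finset.Icc 1 t) ∧
      (∀ i ∉ Finset.Icc 1 t, π i = i) ∧
      FeasibleOn t (fun i => y (π i)) ∧ SortedW t (fun i => y (π i)) := by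
  classical
  set f : Fin t → ℝ := fun k => -(y ((k : ℕ) + 1)) with hfdef
  set τ := Tuple.sort f with hτ
  have hmono : Monotone (f ∘ τ) := Tuple.monotone_sort f
  set π : Equiv.Perm ℕ := Equiv.Perm.extendDomain τ (iccEquiv t) with hπ
  have hπIcc : ∀ i ∈ Finset.Icc 1 t, π i ∈ Finset.Icc 1 t := by
    intro i hi
    rw [hπ, Equiv.Perm.extendDomain_apply_subtype τ (iccEquiv t) hi]
    exact (iccEquiv t _).2
  have hπout : ∀ i ∉ Finset.Icc 1 t, π i = i := by
    intro i hi
    rw [hπ]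
    exact Equiv.Perm.extendDomain_apply_not_subtype τ (iccEquiv t) hi
  have hπval : ∀ (i : ℕ) (hi : i ∈ Finset.Icc 1 t),
      π i = (τ ((iccEquiv t).symm ⟨i, hi⟩) : ℕ) + 1 := by
    intro i hi
    rw [hπ, Equiv.Perm.extendDomain_apply_subtype τ (iccEquiv t) hi]
    rfl
  refine ⟨π, hπIcc, hπout, ⟨fun i => hy.1 _, ?_, ?_⟩, ?_⟩
  · intro i hi
    show y (π i) = 0
    rw [hπout i hi]
    exact hy.2.1 i hi
  · -- sum over Icc of y ∘ π equals 1
    show ∑ i ∈ Finset.Icc 1 t, y (π i) = 1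
    have hbij : ∑ i ∈ Finset.Icc 1 t, y (π i) = ∑ j ∈ Finset.Icc 1 t, y j := by
      apply Finset.sum_nbij' (fun i => π i) (fun j => π.symm j)
      · intro a ha; exact hπIcc a ha
      · intro a ha
        by_contra hc
        have h1 : π (π.symm a) = π.symm a := hπout _ hc
        rw [Equiv.apply_symm_apply] at h1
        exact hc (h1 ▸ ha)
      · intro a _; exact Equiv.symm_apply_apply π a
      · intro a _; exact Equiv.apply_symm_apply π a
      · intro a _; rfl
    rw [hbij]
    exact hy.2.2
  · -- sortedness
    intro i j hi hij hjt
    show y (π j) ≤ y (π i)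
    have hiI : i ∈ Finset.Icc 1 t := Finset.mem_Icc.2 ⟨hi, by omega⟩
    have hjI : j ∈ Finset.Icc 1 t := Finset.mem_Icc.2 ⟨by omega, hjt⟩
    rw [hπval i hiI, hπval j hjI]
    have hfle : f (τ ((iccEquiv t).symm ⟨i, hiI⟩)) ≤ f (τ ((iccEquiv t).symm ⟨j, hjI⟩)) := by
      apply hmono
      show ((iccEquiv t).symm ⟨i, hiI⟩ : Fin t) ≤ (iccEquiv t).symm ⟨j, hjI⟩
      have : ∀ (n : ℕ) (hn : n ∈ Finset.Icc 1 t),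
          (((iccEquiv t).symm ⟨n, hn⟩ : Fin t) : ℕ) = n - 1 := fun n hn => rfl
      rw [Fin.le_def, this i hiI, this j hjI]
      omega
    rw [hfdef] at hfle
    dsimp only at hfle
    linarith

/-! ### permutation transport -/

lemma lagEval_perm (F : Finset (Finset ℕ)) (π : Equiv.Perm ℕ) (y : ℕ → ℝ) :
    lagEval (F.image (fun e => e.image (fun i => π.symm i))) (fun i => y (π i)) =
      lagEval F y := by
  unfold lagEval
  have hinj : ∀ x ∈ F, ∀ x' ∈ F, (fun e : Finset ℕ => e.image (fun i => π.symm i)) x =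
      (fun e : Finset ℕ => e.image (fun i => π.symm i)) x' → x = x' := by
    intro x _ x' _ heq
    exact Finset.image_injective (fun a b h => π.symm.injective h) heq
  rw [Finset.sum_image hinj]
  apply Finset.sum_congr rfl
  intro e _
  rw [Finset.prod_image (fun i _ j _ h => π.symm.injective h)]
  apply Finset.prod_congr rfl
  intro i _
  show y (π (π.symm i)) = y i
  rw [Equiv.apply_symm_apply]

lemma family_perm {r t m : ℕ} {F : Finset (Finset ℕ)} (π : Equiv.Perm ℕ)
    (hπIcc : ∀ i ∈ Finset.Icc 1 t, π i ∈ Finset.Icc 1 t)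
    (hπout : ∀ i ∉ Finset.Icc 1 t, π i = i)
    (hF : F ⊆ Aall r t) (hFc : F.card = m)
    (hFcf : ¬ContainsCliqueOn (Finset.Icc 1 t) r (t-1) F) :
    (F.image (fun e => e.image (fun i => π.symm i))) ⊆ Aall r t ∧
    (F.image (fun e => e.image (fun i => π.symm i))).card = m ∧
    ¬ContainsCliqueOn (Finset.Icc 1 t) r (t-1)
      (F.image (fun e => e.image (fun i => π.symm i))) := by
  have hsymmIcc : ∀ i ∈ Finset.Icc 1 t, π.symm i ∈ Finset.Icc 1 t := by
    intro i hi
    by_contra hc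
    have h1 : π (π.symm i) = π.symm i := hπout _ hc
    rw [Equiv.apply_symm_apply] at h1
    exact hc (h1 ▸ hi)
  have hsinj : Function.Injective (fun i : ℕ => π.symm i) := fun a b h => π.symm.injective h
  have hinj : Function.Injective (fun e : Finset ℕ => e.image (fun i => π.symm i)) :=
    Finset.image_injective hsinj
  refine ⟨?_, ?_, ?_⟩
  · intro e' he'
    rw [Finset.mem_image] at he'
    obtain ⟨e, he, rfl⟩ := he'
    rw [mem_Aall]
    obtain ⟨hesub, hecard⟩ := mem_Aall.1 (hF he)
    constructor
    · intro z hz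
      rw [Finset.mem_image] at hz
      obtain ⟨i, hi, rfl⟩ := hz
      exact hsymmIcc i (hesub hi)
    · rw [Finset.card_image_of_injective _ hsinj, hecard]
  · rw [Finset.card_image_of_injective _ hinj, hFc]
  · intro hcl
    obtain ⟨S, hS1, hS2, hS3⟩ := hcl
    apply hFcf
    refine ⟨S.image (fun i => π i), ?_, ?_, ?_⟩
    · intro z hz
      rw [Finset.mem_image] at hz
      obtain ⟨i, hi, rfl⟩ := hz
      exact hπIcc i (hS1 hi)
    · rw [Finset.card_image_of_injective _ (fun a b h => π.injective h), hS2]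
    · intro χ hχ
      obtain ⟨hχsub, hχcard⟩ := Finset.mem_powersetCard.1 hχ
      have hχ'sub : χ.image (fun i => π.symm i) ⊆ S := by
        intro z hz
        rw [Finset.mem_image] at hz
        obtain ⟨i, hi, rfl⟩ := hz
        have hiS := hχsub hi
        rw [Finset.mem_image] at hiS
        obtain ⟨j, hj, rfl⟩ := hiS
        show π.symm (π j) ∈ S
        rw [Equiv.symm_apply_apply]
        exact hj
      have hχ'card : (χ.image (fun i => π.symm i)).card = r := by
        rw [Finset.card_image_of_injective _ hsinj, hχcard]
      have hχ'F' := hS3 (Finset.mem_powersetCard.2 ⟨hχ'sub, hχ'card⟩)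
      rw [Finset.mem_image] at hχ'F'
      obtain ⟨e, he, heq⟩ := hχ'F'
      have : e = χ := hinj heq
      exact this ▸ he

/-! ### extracting the excluded vertex from a clique -/

lemma clique_gives_vertex {r t : ℕ} (ht : 1 ≤ t) {H : Finset (Finset ℕ)}
    (h : ContainsCliqueOn (Finset.Icc 1 t) r (t-1) H) :
    ∃ v ∈ Finset.Icc 1 t,
      ∀ χ : Finset ℕ, χ ⊆ (Finset.Icc 1 t).erase v → χ.card = r → χ ∈ H := by
  obtain ⟨S, hSsub, hScard, hSpow⟩ := h
  have hcard_lt : S.card < (Finset.Icc 1 t).card := by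
    rw [hScard, Nat.card_Icc]; omega
  have hns : ¬ (Finset.Icc 1 t ⊆ S) := fun hc =>
    absurd (Finset.card_le_card hc) (not_le.2 hcard_lt)
  obtain ⟨v, hvIcc, hvS⟩ := Finset.not_subset.1 hns
  have hSeq : S = (Finset.Icc 1 t).erase v := by
    apply Finset.eq_of_subset_of_card_le
    · exact Finset.subset_erase.2 ⟨hSsub, hvS⟩
    · rw [Finset.card_erase_of_mem hvIcc, hScard, Nat.card_Icc]; omega
  refine ⟨v, hvIcc, ?_⟩
  intro χ h1 h2
  exact hSpow (Finset.mem_powersetCard.2 ⟨hSeq ▸ h1, h2⟩)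

/-! ### numeric facts -/

lemma two_pow_bound : ∀ r : ℕ, 4 ≤ r → 2*r + 3 ≤ 2^r := by
  intro r hr
  induction r with
  | zero => omega
  | succ n ih =>
    by_cases hn : 4 ≤ n
    · have := ih hn
      have : 2^n ≤ 2^(n+1) := Nat.pow_le_pow_right (by norm_num) (by omega)
      omega
    · have : n = 3 := by omega
      subst this
      norm_num

lemma pascal2 (a b : ℕ) :
    (a+2).choose (b+2) = (a+1).choose (b+2) + (a.choose (b+1) + a.choose b) := by
  have e1 : a + 2 = (a+1) + 1 := by omega
  have e2 : b + 2 = (b+1) + 1 := by omega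
  rw [e1, e2, Nat.choose_succ_succ' (a+1) (b+1), Nat.choose_succ_succ' a b]
  omega

lemma numeric_main (r m t : ℕ) (hr : 4 ≤ r) (hrt : r < t)
    (h1 : (t - 1).choose r ≤ m)
    (h2 : m ≤ (t - 1).choose r + (t - 2).choose (r - 1) -
      ((2 * r - 6) * 2 ^ (r - 1) + 2 ^ (r - 3) + (r - 4) * (2 * r - 7) - 1) *
        ((t - 2).choose (r - 2) - 1)) :
    r + 2 ≤ t ∧
    r + 2 ≤ ((2 * r - 6) * 2 ^ (r - 1) + 2 ^ (r - 3) + (r - 4) * (2 * r - 7) - 1) *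
        ((t - 2).choose (r - 2) - 1) ∧
    m + (((t-2).choose (r-2)) + ((2 * r - 6) * 2 ^ (r - 1) + 2 ^ (r - 3) +
        (r - 4) * (2 * r - 7) - 1) * ((t - 2).choose (r - 2) - 1)) ≤ t.choose r := by
  set K := (2 * r - 6) * 2 ^ (r - 1) + 2 ^ (r - 3) + (r - 4) * (2 * r - 7) - 1 with hKdef
  -- K is large
  have hpow : 2*r + 3 ≤ 2^r := two_pow_bound r hr
  have hpows : 2^r = 2 * 2^(r-1) := by
    have e : r - 1 + 1 = r := by omega
    calc 2^r = 2^(r-1+1) := by rw [e]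
    _ = 2^(r-1) * 2 := pow_succ 2 (r-1)
    _ = 2 * 2^(r-1) := by ring
  have hKbig : 2*r + 2 ≤ K := by
    have hmul : 2 * 2^(r-1) ≤ (2*r-6) * 2^(r-1) :=
      Nat.mul_le_mul_right _ (by omega)
    have hg : 1 ≤ 2^(r-3) := Nat.one_le_two_pow
    rw [hKdef]
    omega
  clear_value K
  clear hKdef hpows hpow
  have ht2 : r + 2 ≤ t := by
    by_contra hc
    have ht : t = r + 1 := by omega
    subst ht
    have e1 : r + 1 - 1 = r := by omega
    have e2 : r + 1 - 2 = r - 1 := by omega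
    rw [e1, Nat.choose_self] at h1
    rw [e1, e2, Nat.choose_self] at h2
    have heq : (r-1).choose (r-2) = r-1 := by
      have e : (r-1) - (r-2) = 1 := by omega
      have hs := Nat.choose_symm (show r-2 ≤ r-1 by omega)
      rw [e, Nat.choose_one_right] at hs
      omega
    rw [Nat.choose_self, heq] at h2
    have hKr : 2*1 ≤ K * (r - 1 - 1) := Nat.mul_le_mul (by omega) (by omega)
    omega
  have hClow : r - 1 ≤ (t-2).choose (r-2) := by
    have hmono := Nat.choose_le_choose (r-2) (show r-1 ≤ t-2 by omega)
    have heq : (r-1).choose (r-2) = r-1 := by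
      have e : (r-1) - (r-2) = 1 := by omega
      have hs := Nat.choose_symm (show r-2 ≤ r-1 by omega)
      rw [e, Nat.choose_one_right] at hs
      omega
    omega
  have hQ : r + 2 ≤ K * ((t-2).choose (r-2) - 1) := by
    have hmul : (2*r+2) * 2 ≤ K * ((t-2).choose (r-2) - 1) :=
      Nat.mul_le_mul hKbig (by omega)
    omega
  refine ⟨ht2, hQ, ?_⟩
  have hPascal : t.choose r = (t-1).choose r + ((t-2).choose (r-1) + (t-2).choose (r-2)) := by
    have e := pascal2 (t-2) (r-2)
    have e1 : t - 2 + 2 = t := by omega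
    have e2 : r - 2 + 2 = r := by omega
    have e3 : t - 2 + 1 = t - 1 := by omega
    have e4 : r - 2 + 1 = r - 1 := by omega
    rw [e1, e2, e3, e4] at e
    exact e
  have hpos : 1 ≤ (t-1).choose r := Nat.choose_pos (by omega)
  omega

lemma family_nonempty (r m t : ℕ) (hr : 4 ≤ r) (hrt2 : r + 2 ≤ t)
    (hroom : m + ((t-2).choose (r-2) + 2) ≤ (Aall r t).card) :
    ∃ G : Finset (Finset ℕ), G ⊆ Aall r t ∧ G.card = m ∧
      ¬ContainsCliqueOn (Finset.Icc 1 t) r (t-1) G := by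
  classical
  set Mstar := Finset.Icc (t-r) (t-1) with hMs
  set Mstar' := insert t (Finset.Icc (t-r) (t-2)) with hMs'
  have hMsall : Mstar ∈ Aall r t := by
    rw [mem_Aall, hMs]
    constructor
    · intro z hz
      have := Finset.mem_Icc.1 hz
      exact Finset.mem_Icc.2 ⟨by omega, by omega⟩
    · rw [Nat.card_Icc]; omega
  have htnot : t ∉ Finset.Icc (t-r) (t-2) := by
    intro hc; have := Finset.mem_Icc.1 hc; omega
  have hMs'all : Mstar' ∈ Aall r t := by
    rw [mem_Aall, hMs']
    constructor
    · intro z hz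
      rcases Finset.mem_insert.1 hz with h' | h'
      · exact h' ▸ Finset.mem_Icc.2 ⟨by omega, le_rfl⟩
      · have := Finset.mem_Icc.1 h'
        exact Finset.mem_Icc.2 ⟨by omega, by omega⟩
    · rw [Finset.card_insert_of_notMem htnot, Nat.card_Icc]; omega
  set M0 := ((Aall r t).filter (fun χ => t-1 ∈ χ ∧ t ∈ χ)) ∪ {Mstar, Mstar'} with hM0
  have hM0sub : M0 ⊆ Aall r t := by
    intro χ hχ
    rcases Finset.mem_union.1 hχ with h' | h'
    · exact Finset.mem_of_mem_filter _ h'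
    · rcases Finset.mem_insert.1 h' with h'' | h''
      · exact h'' ▸ hMsall
      · rw [Finset.mem_singleton.1 h'']; exact hMs'all
  have hM0card : M0.card ≤ (t-2).choose (r-2) + 2 := by
    have hc1 : ((Aall r t).filter (fun χ => t-1 ∈ χ ∧ t ∈ χ)).card ≤ (t-2).choose (r-2) := by
      apply card_subsets_with_two (v := t-1) (w := t)
        (Finset.mem_Icc.2 ⟨by omega, by omega⟩) (Finset.mem_Icc.2 ⟨by omega, le_rfl⟩)
        (by omega)
      intro s hs
      obtain ⟨hs1, hs2⟩ := Finset.mem_filter.1 hs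
      exact ⟨(mem_Aall.1 hs1).1, (mem_Aall.1 hs1).2, hs2.1, hs2.2⟩
    have hc2 : ({Mstar, Mstar'} : Finset (Finset ℕ)).card ≤ 2 := by
      have := Finset.card_insert_le Mstar ({Mstar'} : Finset (Finset ℕ))
      simp only [Finset.card_singleton] at this
      omega
    have := Finset.card_union_le ((Aall r t).filter (fun χ => t-1 ∈ χ ∧ t ∈ χ))
      ({Mstar, Mstar'} : Finset (Finset ℕ))
    rw [hM0]
    omega
  have hsdcard : m ≤ ((Aall r t) \ M0).card := by
    rw [Finset.card_sdiff_of_subset hM0sub]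
    omega
  obtain ⟨G, hGsub0, hGcard⟩ := Finset.exists_subset_card_eq hsdcard
  refine ⟨G, hGsub0.trans Finset.sdiff_subset, hGcard, ?_⟩
  intro hcl
  obtain ⟨v, hvI, hvall⟩ := clique_gives_vertex (by omega) hcl
  have hχ : ∃ χ ∈ M0, χ ⊆ (Finset.Icc 1 t).erase v ∧ χ.card = r := by
    by_cases hvt : v = t
    · refine ⟨Mstar, Finset.mem_union_right _ (Finset.mem_insert_self _ _), ?_, ?_⟩
      · intro z hz
        have := Finset.mem_Icc.1 hz
        refine Finset.mem_erase.2 ⟨by omega, Finset.mem_Icc.2 ⟨by omega, by omega⟩⟩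
      · rw [hMs, Nat.card_Icc]; omega
    by_cases hvt1 : v = t-1
    · refine ⟨Mstar', Finset.mem_union_right _
        (Finset.mem_insert.2 (Or.inr (Finset.mem_singleton_self _))), ?_, ?_⟩
      · intro z hz
        rcases Finset.mem_insert.1 hz with h' | h'
        · refine Finset.mem_erase.2 ⟨by omega, h' ▸ Finset.mem_Icc.2 ⟨by omega, le_rfl⟩⟩
        · have := Finset.mem_Icc.1 h'
          refine Finset.mem_erase.2 ⟨by omega, Finset.mem_Icc.2 ⟨by omega, by omega⟩⟩
      · rw [hMs', Finset.card_insert_of_notMem htnot, Nat.card_Icc]; omega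
    · have hvle : v ≤ t - 2 := by have := Finset.mem_Icc.1 hvI; omega
      have hv1 : 1 ≤ v := (Finset.mem_Icc.1 hvI).1
      have hcard_ge : r - 2 ≤ ((Finset.Icc 1 (t-2)).erase v).card := by
        rw [Finset.card_erase_of_mem (Finset.mem_Icc.2 ⟨hv1, hvle⟩), Nat.card_Icc]
        omega
      obtain ⟨c, hcsub, hccard⟩ := Finset.exists_subset_card_eq hcard_ge
      have hcprop : ∀ z ∈ c, (1 ≤ z ∧ z ≤ t-2) ∧ z ≠ v := by
        intro z hz
        have h' := Finset.mem_erase.1 (hcsub hz)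
        exact ⟨Finset.mem_Icc.1 h'.2, h'.1⟩
      have htc : t ∉ c := fun hc => by have := (hcprop t hc).1; omega
      have ht1c : t-1 ∉ insert t c := by
        intro hc
        rcases Finset.mem_insert.1 hc with h' | h'
        · omega
        · have := (hcprop _ h').1; omega
      have hcardχ : (insert (t-1) (insert t c)).card = r := by
        rw [Finset.card_insert_of_notMem ht1c, Finset.card_insert_of_notMem htc, hccard]
        omega
      refine ⟨insert (t-1) (insert t c), ?_, ?_, hcardχ⟩
      · refine Finset.mem_union_left _ (Finset.mem_filter.2 ⟨?_, ?_, ?_⟩)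
        · rw [mem_Aall]
          refine ⟨?_, hcardχ⟩
          intro z hz
          rcases Finset.mem_insert.1 hz with h' | h'
          · exact h' ▸ Finset.mem_Icc.2 ⟨by omega, by omega⟩
          rcases Finset.mem_insert.1 h' with h'' | h''
          · exact h'' ▸ Finset.mem_Icc.2 ⟨by omega, le_rfl⟩
          · have := (hcprop _ h'').1
            exact Finset.mem_Icc.2 ⟨by omega, by omega⟩
        · exact Finset.mem_insert_self _ _
        · exact Finset.mem_insert_of_mem (Finset.mem_insert_self _ _)
      · intro z hz
        rcases Finset.mem_insert.1 hz with h' | h'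
        · exact Finset.mem_erase.2 ⟨by omega, h' ▸ Finset.mem_Icc.2 ⟨by omega, by omega⟩⟩
        rcases Finset.mem_insert.1 h' with h'' | h''
        · exact Finset.mem_erase.2 ⟨by omega, h'' ▸ Finset.mem_Icc.2 ⟨by omega, le_rfl⟩⟩
        · have h3 := (hcprop _ h'')
          exact Finset.mem_erase.2 ⟨h3.2, Finset.mem_Icc.2 ⟨by omega, by omega⟩⟩
  obtain ⟨χ, hχM0, hχsub, hχcard⟩ := hχ
  have hχG : χ ∈ G := hvall χ hχsub hχcard
  have hχsd : χ ∈ (Aall r t) \ M0 := hGsub0 hχG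
  exact (Finset.mem_sdiff.1 hχsd).2 hχM0


/-- For `r ≥ 4` and `m` in the stated range, there is a left-compressed r-graph on
`[t]` with `m` edges, not containing `[t−1]^{(r)}`, whose Lagrangian equals
`λ^{r−}_{(m,t−1,t)}`: the maximum Lagrangian over all r-graphs with `t` vertices
and `m` edges containing no clique of order `t−1`. -/
theorem stmt11 (r m t : ℕ) (hr : 4 ≤ r) (hrt : r < t)
    (h1 : (t - 1).choose r ≤ m)
    (h2 : m ≤ (t - 1).choose r + (t - 2).choose (r - 1) -
      ((2 * r - 6) * 2 ^ (r - 1) + 2 ^ (r - 3) + (r - 4) * (2 * r - 7) - 1) *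
        ((t - 2).choose (r - 2) - 1)) :
    ∃ E : Finset (Finset ℕ), IsRGraphOn r t E ∧ E.card = m ∧ LeftCompressed E ∧
      ¬ completeG (t - 1) r ⊆ E ∧
      lagrangian E = sSup {y : ℝ | ∃ F : Finset (Finset ℕ),
        IsRGraphOn r t F ∧ F.card = m ∧
        ¬ ContainsCliqueOn (Finset.Icc 1 t) r (t - 1) F ∧ lagrangian F = y} := by
  classical
  obtain ⟨hrt2, hQbig, hcount⟩ := numeric_main r m t hr hrt h1 h2
  set Qv := ((2 * r - 6) * 2 ^ (r - 1) + 2 ^ (r - 3) + (r - 4) * (2 * r - 7) - 1) *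
      ((t - 2).choose (r - 2) - 1) with hQvdef
  clear_value Qv
  clear hQvdef h1 h2
  have ht1 : (1:ℕ) ≤ t := by omega
  have hAcard : (Aall r t).card = t.choose r := by
    rw [Aall, Finset.card_powersetCard, Nat.card_Icc]
    have e : t + 1 - 1 = t := by omega
    rw [e]
  have hMQ : ∀ G : Finset (Finset ℕ), G ⊆ Aall r t → G.card = m →
      (t-2).choose (r-2) + Qv ≤ ((Aall r t) \ G).card := by
    intro G hsub hcard
    rw [Finset.card_sdiff_of_subset hsub, hcard, hAcard]
    omega
  have hroom : m + ((t-2).choose (r-2) + 2) ≤ (Aall r t).card := by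
    rw [hAcard]; omega
  obtain ⟨G₀, hG₀sub, hG₀card, hG₀cf⟩ := family_nonempty r m t hr hrt2 hroom
  have hunit_sorted : SortedW t unitW := by
    intro i j hi hij hjt
    unfold unitW
    by_cases hj : j = 1
    · have hi1 : i = 1 := by omega
      rw [hj, hi1]
    · rw [if_neg hj]
      split
      · norm_num
      · norm_num
  obtain ⟨E₀, hE₀sub, hE₀card, hE₀cf, hE₀lc, _⟩ :=
    process r t m Qv hr hrt2 hQbig hMQ (phiW G₀) G₀ le_rfl hG₀sub hG₀card hG₀cf
      unitW unitW_feasible hunit_sorted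
  set T : Finset (Finset (Finset ℕ)) := (Aall r t).powerset.filter
    (fun G => G.card = m ∧ ¬ContainsCliqueOn (Finset.Icc 1 t) r (t-1) G ∧
      LeftCompressed G) with hT
  have hE₀T : E₀ ∈ T := by
    rw [hT, Finset.mem_filter, Finset.mem_powerset]
    exact ⟨hE₀sub, hE₀card, hE₀cf, hE₀lc⟩
  obtain ⟨E, hET, hEmax⟩ := Finset.exists_max_image T lagrangian ⟨E₀, hE₀T⟩
  rw [hT, Finset.mem_filter, Finset.mem_powerset] at hET
  obtain ⟨hEsub, hEcard, hEcf, hElc⟩ := hET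
  have hkey : ∀ F : Finset (Finset ℕ), IsRGraphOn r t F → F.card = m →
      ¬ContainsCliqueOn (Finset.Icc 1 t) r (t-1) F → lagrangian F ≤ lagrangian E := by
    intro F hF1 hF2 hF3
    have hFsub : F ⊆ Aall r t := by
      intro e he
      exact mem_Aall.2 ⟨(hF1 e he).2, (hF1 e he).1⟩
    apply lagrangian_le
    intro x hx
    obtain ⟨y, hyF, hylag⟩ := mass_shift ht1 hx
    have hxy : lagEval F x ≤ lagEval F y := hylag F (fun e he => (hF1 e he).2)
    obtain ⟨π, hπIcc, hπout, hzfeas, hzsort⟩ := exists_sorting_perm ht1 y hyF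
    obtain ⟨hF'sub, hF'card, hF'cf⟩ := family_perm π hπIcc hπout hFsub hF2 hF3
    have heval : lagEval (F.image (fun e => e.image (fun i => π.symm i)))
        (fun i => y (π i)) = lagEval F y := lagEval_perm F π y
    obtain ⟨G', hG'1, hG'2, hG'3, hG'4, hG'5⟩ :=
      process r t m Qv hr hrt2 hQbig hMQ
        (phiW (F.image (fun e => e.image (fun i => π.symm i))))
        (F.image (fun e => e.image (fun i => π.symm i))) le_rfl hF'sub hF'card hF'cf
        (fun i => y (π i)) hzfeas.feasible hzsort
    have hG'T : G' ∈ T := by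
      rw [hT, Finset.mem_filter, Finset.mem_powerset]
      exact ⟨hG'1, hG'2, hG'3, hG'4⟩
    calc lagEval F x ≤ lagEval F y := hxy
    _ = lagEval (F.image (fun e => e.image (fun i => π.symm i))) (fun i => y (π i)) :=
        heval.symm
    _ ≤ lagrangian G' := hG'5
    _ ≤ lagrangian E := hEmax G' hG'T
  refine ⟨E, ?_, hEcard, hElc, ?_, ?_⟩
  · intro e he
    exact ⟨(mem_Aall.1 (hEsub he)).2, (mem_Aall.1 (hEsub he)).1⟩
  · intro hc
    apply hEcf
    refine ⟨Finset.Icc 1 (t-1), ?_, ?_, ?_⟩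
    · intro z hz
      have := Finset.mem_Icc.1 hz
      exact Finset.mem_Icc.2 ⟨this.1, by omega⟩
    · rw [Nat.card_Icc]; omega
    · exact hc
  · symm
    apply IsGreatest.csSup_eq
    constructor
    · exact ⟨E, (fun e he => ⟨(mem_Aall.1 (hEsub he)).2, (mem_Aall.1 (hEsub he)).1⟩),
        hEcard, hEcf, rfl⟩
    · rintro yv ⟨F, hFa, hFb, hFc, rfl⟩
      exact hkey F hFa hFb hFc
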